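/- arXiv:0912.2088 — 4 statements merged into one kernel-verified Lean document; each statement's English description precedes it below -/
import Mathlib

section
/- Left Ore condition (LF2) for E-weak equivalences: for every pair of morphisms s : A → B and f : A → C in T with s ∈ W, there exist a morphism g : B → D in T and a morphism t : C → D in W such that g ∘ s = t ∘ f. -/
open CategoryTheory Category Limits Pretriangulated Triangulated

namespace CategoryTheory.Triangulated

/-- The structure `Triangulated.Subcategory` of the December 2024 Mathlib
(removed since), restored with its old fields. -/
structure Subcategory (C : Type*) [Category C] [HasZeroObject C] [HasShift C ℤ]
    [Preadditive C] [∀ (n : ℤ), (shiftFunctor C n).Additive] [Pretriangulated C] where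
  P : C → Prop
  zero' : ∃ (Z : C) (_ : IsZero Z), P Z
  shift (X : C) (n : ℤ) : P X → P (X⟦n⟧)
  ext₂' (T : Triangle C) (_ : T ∈ distTriang C) : P T.obj₁ → P T.obj₃ →
    ObjectProperty.isoClosure P T.obj₂

/-- The old `Triangulated.Subcategory.W`: morphisms whose cone satisfies `S.P`. -/
def Subcategory.W {C : Type*} [Category C] [HasZeroObject C] [HasShift C ℤ]
    [Preadditive C] [∀ (n : ℤ), (shiftFunctor C n).Additive] [Pretriangulated C]
    (S : Subcategory C) : MorphismProperty C :=
  fun X Y f => ∃ (Z : C) (g : Y ⟶ Z) (h : Z ⟶ X⟦(1 : ℤ)⟧)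
    (_ : Triangle.mk f g h ∈ distTriang C), S.P Z

end CategoryTheory.Triangulated

/-- **Left Ore condition (LF2) for `E`-weak equivalences.**
For every pair of morphisms `s : A ⟶ B` and `f : A ⟶ C` in a triangulated
category `T`, where `s` is an `E`-weak equivalence for a thick subcategory `E`,
there are a morphism `g : B ⟶ D` and an `E`-weak equivalence `t : C ⟶ D`
such that `g ∘ s = t ∘ f`. -/
theorem left_ore_condition {T : Type*} [Category T] [HasZeroObject T] [Preadditive T]
    [HasShift T ℤ] [∀ n : ℤ, (shiftFunctor T n).Additive] [Pretriangulated T]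
    [IsTriangulated T] (E : Triangulated.Subcategory T) [ObjectProperty.IsClosedUnderIsomorphisms E.P]
    (hthick : ∀ ⦃X Y : T⦄ (i : X ⟶ Y) (r : Y ⟶ X), i ≫ r = 𝟙 X → E.P Y → E.P X)
    {A B C : T} (s : A ⟶ B) (f : A ⟶ C) (hs : E.W s) :
    ∃ (D : T) (g : B ⟶ D) (t : C ⟶ D), E.W t ∧ s ≫ g = f ≫ t := by
  obtain ⟨Z, g, h, hT, hZ⟩ := hs
  have h1 := inv_rot_of_distTriang _ hT
  obtain ⟨D, t, w, hT2⟩ := distinguished_cocone_triangle ((Triangle.mk s g h).invRotate.mor₁ ≫ f)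
  obtain ⟨c, hc1, _⟩ := complete_distinguished_triangle_morphism _ _ h1 hT2 (𝟙 _) f (Category.id_comp _).symm
  refine ⟨D, c, t, ⟨_, w, _, rot_of_distTriang _ hT2, E.shift _ _ (E.shift _ _ hZ)⟩, ?_⟩
  exact hc1
end

section
/- The colocalisation bifunctor is cohomological in its first variable: for objects A, B of T set T⊥(A,B) := colim over Subo(B) of the diagram (s : E → B) ↦ Hom_T(A, E). Then for every distinguished triangle A' → A → A'' → A'[1] in T, the sequence T⊥(A'', B) → T⊥(A, B) → T⊥(A', B), with maps induced by precomposition with A → A'' and A' → A, is exact at T⊥(A, B). -/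
open CategoryTheory Category Limits Pretriangulated Triangulated

universe u

namespace Triangulated

/-- The pre-2025 Mathlib structure `Triangulated.Subcategory`, restored with its old meaning. -/
structure Subcategory (C : Type*) [Category C] [HasZeroObject C] [HasShift C ℤ] [Preadditive C]
    [∀ n : ℤ, (shiftFunctor C n).Additive] [Pretriangulated C] where
  P : C → Prop
  zero' : ∃ (Z : C) (_ : IsZero Z), P Z
  shift (X : C) (n : ℤ) : P X → P (X⟦n⟧)
  ext₂' (T : Triangle C) (_ : T ∈ distTriang C) : P T.obj₁ → P T.obj₃ →
    ObjectProperty.isoClosure P T.obj₂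

end Triangulated

variable {T : Type u} [SmallCategory T] [HasZeroObject T] [Preadditive T]
  [HasShift T ℤ] [∀ n : ℤ, (shiftFunctor T n).Additive] [Pretriangulated T]

variable (E : Triangulated.Subcategory T)

/-- `Subo(B)`: full subcategory of `Over B` on morphisms `s : X ⟶ B` with `X` in `E`. -/
abbrev SuboCat (B : T) := ObjectProperty.FullSubcategory (fun f : Over B => E.P f.left)

/-- The diagram `(s : X ⟶ B) ↦ F(X)` on `Subo(B)`. -/
def suboDiagram (F : T ⥤ Ab.{u}) (B : T) : SuboCat E B ⥤ Ab.{u} :=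
  ObjectProperty.ι _ ⋙ Over.forget B ⋙ F

/-- The right colocalisation `R⊥F(B) := colim_{Subo(B)} F(X)`. -/
noncomputable abbrev coloc (F : T ⥤ Ab.{u}) (B : T) : Ab.{u} :=
  colimit (suboDiagram E F B)

/-- The diagram `(s : X ⟶ B) ↦ Hom_T(A, X)` on `Subo(B)`, with values in
abelian groups. -/
def homDiagram (A B : T) : SuboCat E B ⥤ Ab.{u} :=
  ObjectProperty.ι _ ⋙ Over.forget B ⋙ preadditiveCoyoneda.obj (Opposite.op A)

/-- The colocalisation bifunctor `T⊥(A,B) := colim_{(s : X ⟶ B) ∈ Subo(B)} Hom_T(A, X)`. -/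
noncomputable def Tbot (A B : T) : Ab.{u} :=
  colimit (homDiagram E A B)

/-- The map `T⊥(A,B) ⟶ T⊥(A',B)` induced by precomposition with `f : A' ⟶ A`. -/
noncomputable def TbotMapLeft {A A' : T} (f : A' ⟶ A) (B : T) :
    Tbot E A B ⟶ Tbot E A' B :=
  colimMap
    { app := fun X => (preadditiveCoyoneda.map f.op).app X.obj.left
      naturality := by
        intro X Y g
        exact ((preadditiveCoyoneda.map f.op).naturality g.hom.left).symm ▸
          ((preadditiveCoyoneda.map f.op).naturality g.hom.left) }

namespace Triangulated.Subcategory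

variable {C : Type*} [Category C] [HasZeroObject C] [HasShift C ℤ] [Preadditive C]
  [∀ n : ℤ, (shiftFunctor C n).Additive] [Pretriangulated C] (S : Subcategory C)
  [ObjectProperty.IsClosedUnderIsomorphisms S.P]

open ZeroObject in
lemma zero : S.P 0 := by
  obtain ⟨Z, hZ, hP⟩ := S.zero'
  exact ObjectProperty.prop_of_iso _ hZ.isoZero hP

lemma ext₂ (T : Triangle C) (hT : T ∈ distTriang C) (h₁ : S.P T.obj₁) (h₃ : S.P T.obj₃) :
    S.P T.obj₂ := by
  obtain ⟨Y, hY, ⟨e⟩⟩ := S.ext₂' T hT h₁ h₃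
  exact ObjectProperty.prop_of_iso _ e.symm hY

lemma ext₃ (T : Triangle C) (hT : T ∈ distTriang C) (h₁ : S.P T.obj₁) (h₂ : S.P T.obj₂) :
    S.P T.obj₃ :=
  S.ext₂ _ (rot_of_distTriang _ hT) h₂ (S.shift _ 1 h₁)

end Triangulated.Subcategory

section Aux

open ZeroObject

variable [ObjectProperty.IsClosedUnderIsomorphisms E.P]

instance suboCat_isFiltered (B : T) : IsFiltered (SuboCat E B) where
  nonempty := ⟨⟨Over.mk (0 : (0 : T) ⟶ B), E.zero⟩⟩
  cocone_objs := by
      intro X Y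
      refine ⟨⟨Over.mk (biprod.desc X.obj.hom Y.obj.hom),
          E.ext₂ _ (binaryBiproductTriangle_distinguished X.obj.left Y.obj.left) X.2 Y.2⟩,
        ObjectProperty.homMk (Over.homMk biprod.inl),
          ObjectProperty.homMk (Over.homMk biprod.inr), trivial⟩
  cocone_maps := by
      intro X Y g h
      have hd : (g.hom.left - h.hom.left) ≫ Y.obj.hom = 0 := by
        simp [Preadditive.sub_comp, Over.w g.hom, Over.w h.hom]
      obtain ⟨Z, c, w, mem⟩ := Pretriangulated.distinguished_cocone_triangle (g.hom.left - h.hom.left)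
      have hZ : E.P Z := E.ext₃ _ mem X.2 Y.2
      obtain ⟨r, hr⟩ := Triangle.yoneda_exact₂ _ mem Y.obj.hom hd
      refine ⟨⟨Over.mk r, hZ⟩, ObjectProperty.homMk (Over.homMk c hr.symm), ?_⟩
      apply ObjectProperty.hom_ext
      apply Over.OverMorphism.ext
      have : (g.hom.left - h.hom.left) ≫ c = 0 :=
        Pretriangulated.comp_distTriang_mor_zero₁₂ _ mem
      have h' : g.hom.left ≫ c = h.hom.left ≫ c := by
        rw [← sub_eq_zero, ← Preadditive.sub_comp]; exact this
      exact h'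

lemma TbotMapLeft_ι {A A' : T} (f : A' ⟶ A) (B : T) (j : SuboCat E B)
    (φ : (homDiagram E A B).obj j) :
    TbotMapLeft E f B (colimit.ι (homDiagram E A B) j φ) =
      colimit.ι (homDiagram E A' B) j (f ≫ φ) := by
  change (colimit.ι (homDiagram E A B) j ≫ TbotMapLeft E f B) φ = _
  unfold TbotMapLeft
  erw [ι_colimMap]
  rfl

lemma homDiagram_map_apply {A B : T} {j k : SuboCat E B} (u : j ⟶ k)
    (φ : (homDiagram E A B).obj j) :
    (homDiagram E A B).map u φ = φ ≫ u.hom.left :=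
  rfl

end Aux

/-- **The colocalisation bifunctor is cohomological in its first variable.**
For every distinguished triangle `A' ⟶ A ⟶ A'' ⟶ A'⟦1⟧` in a small
triangulated category `T` with thick subcategory `E`, and every object `B`, the
sequence `T⊥(A'',B) ⟶ T⊥(A,B) ⟶ T⊥(A',B)`, with maps induced by precomposition
with `A ⟶ A''` and `A' ⟶ A`, is exact at `T⊥(A,B)`. -/
theorem Tbot_cohomological_fst [IsTriangulated T] [ObjectProperty.IsClosedUnderIsomorphisms E.P]
    (hthick : ∀ ⦃X Y : T⦄ (i : X ⟶ Y) (r : Y ⟶ X), i ≫ r = 𝟙 X → E.P Y → E.P X)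
    {A' A A'' : T} (f₁ : A' ⟶ A) (f₂ : A ⟶ A'') (f₃ : A'' ⟶ A'⟦(1:ℤ)⟧)
    (hT : Triangle.mk f₁ f₂ f₃ ∈ distTriang T) (B : T) :
    Function.Exact ⇑(TbotMapLeft E f₂ B) ⇑(TbotMapLeft E f₁ B) := by
  intro x
  constructor
  · intro hx
    obtain ⟨j, φ, rfl⟩ := Concrete.colimit_exists_rep (homDiagram E A B) x
    have h0 : colimit.ι (homDiagram E A' B) j (f₁ ≫ φ) =
        colimit.ι (homDiagram E A' B) j 0 := by
      rw [map_zero, ← TbotMapLeft_ι E f₁ B j φ]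
      exact hx
    obtain ⟨k, u, v, huv⟩ := Concrete.colimit_exists_of_rep_eq (homDiagram E A' B) _ _ h0
    change (f₁ ≫ φ) ≫ u.hom.left = 0 ≫ v.hom.left at huv
    rw [Limits.zero_comp] at huv
    have hzero : f₁ ≫ (φ ≫ u.hom.left) = 0 := by
      exact (Category.assoc _ _ _).symm.trans huv
    obtain ⟨ψ, hψ⟩ := Triangle.yoneda_exact₂ _ hT (φ ≫ u.hom.left) hzero
    refine ⟨colimit.ι (homDiagram E A'' B) k ψ, ?_⟩
    erw [TbotMapLeft_ι, show f₂ ≫ ψ = φ ≫ u.hom.left from hψ.symm,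
      ← homDiagram_map_apply E u φ]
    exact colimit.w_apply (homDiagram E A B) u φ
  · rintro ⟨y, rfl⟩
    have hz : TbotMapLeft E f₂ B ≫ TbotMapLeft E f₁ B = 0 := by
      apply colimit.hom_ext
      intro j
      ext φ
      change TbotMapLeft E f₁ B (TbotMapLeft E f₂ B
        (colimit.ι (homDiagram E A'' B) j φ)) = _
      erw [TbotMapLeft_ι, TbotMapLeft_ι, ← Category.assoc,
        show f₁ ≫ f₂ = 0 from comp_distTriang_mor_zero₁₂ _ hT, Limits.zero_comp,
        map_zero]
      rfl
    change (TbotMapLeft E f₂ B ≫ TbotMapLeft E f₁ B) y = 0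
    rw [hz]
    simp
end

section
/- Universal property of the colocalisation: let G, H : T ⥤ Ab be homological functors and suppose H is colocal, i.e. the canonical natural transformation R⊥H ⟶ H is an isomorphism. Then composition with the canonical natural transformation R⊥G ⟶ G gives a bijection between natural transformations H ⟶ R⊥G and natural transformations H ⟶ G. -/
open CategoryTheory Category Limits Pretriangulated Triangulated

universe u

variable {T : Type u} [SmallCategory T] [HasZeroObject T] [Preadditive T]
  [HasShift T ℤ] [∀ n : ℤ, (shiftFunctor T n).Additive] [Pretriangulated T]

variable (E : Triangulated.Subcategory T)

/-- The map `R⊥F(B) ⟶ R⊥F(B')` induced by `f : B ⟶ B'` via postcomposition. -/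
noncomputable abbrev colocMap (F : T ⥤ Ab.{u}) {B B' : T} (f : B ⟶ B') :
    coloc E F B ⟶ coloc E F B' :=
  colimit.desc (suboDiagram E F B)
    { pt := coloc E F B'
      ι :=
        { app := fun X => colimit.ι (suboDiagram E F B') ⟨Over.mk (X.obj.hom ≫ f), X.property⟩
          naturality := by
            intro X Y g
            dsimp [suboDiagram]
            refine Eq.trans ?_ (comp_id _).symm
            exact colimit.w (suboDiagram E F B')
              (show (⟨Over.mk (X.obj.hom ≫ f), X.property⟩ : SuboCat E B') ⟶
                  ⟨Over.mk (Y.obj.hom ≫ f), Y.property⟩ from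
                ObjectProperty.homMk (Over.homMk g.hom.left (by dsimp; rw [← assoc, Over.w g.hom]))) } }

@[simp]
lemma ι_colocMap (F : T ⥤ Ab.{u}) {B B' : T} (f : B ⟶ B') (X : SuboCat E B) :
    colimit.ι (suboDiagram E F B) X ≫ colocMap E F f =
      colimit.ι (suboDiagram E F B') ⟨Over.mk (X.obj.hom ≫ f), X.property⟩ :=
  colimit.ι_desc _ _

lemma coloc_ι_eq (F : T ⥤ Ab.{u}) {B : T} {A : T} {f g : A ⟶ B} (hA : E.P A) (hfg : f = g) :
    colimit.ι (suboDiagram E F B) ⟨Over.mk f, hA⟩ =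
      colimit.ι (suboDiagram E F B) ⟨Over.mk g, hA⟩ := by
  subst hfg; rfl

/-- The right colocalisation functor `R⊥F : T ⥤ Ab`. -/
noncomputable abbrev colocFunctor (F : T ⥤ Ab.{u}) : T ⥤ Ab.{u} where
  obj B := coloc E F B
  map f := colocMap E F f
  map_id B := by
    apply colimit.hom_ext
    intro X
    try dsimp only
    rw [ι_colocMap, comp_id]
    exact coloc_ι_eq E F X.property (by simp)
  map_comp {B B' B''} f g := by
    apply colimit.hom_ext
    intro X
    try dsimp only
    simp only [← assoc, ι_colocMap]
    erw [ι_colocMap]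
    exact coloc_ι_eq E F X.property (by simp)

/-- The canonical natural transformation `R⊥F ⟶ F`, assembled from the maps
`F(s) : F(X) ⟶ F(B)` for objects `s : X ⟶ B` of `Subo(B)`. -/
noncomputable def colocCounit (F : T ⥤ Ab.{u}) : colocFunctor E F ⟶ F where
  app B := colimit.desc (suboDiagram E F B)
    { pt := F.obj B
      ι :=
        { app := fun X => F.map X.obj.hom
          naturality := by
            intro X Y g
            dsimp [suboDiagram]
            rw [comp_id, ← F.map_comp, Over.w g.hom] } }
  naturality := by
    intro B B' f
    apply colimit.hom_ext
    intro X
    dsimp [colocFunctor]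
    rw [← assoc, ι_colocMap]
    erw [colimit.ι_desc, colimit.ι_desc_assoc]
    simp
    rfl


@[simp]
lemma ι_colocCounit (F : T ⥤ Ab.{u}) {B : T} (S : SuboCat E B) :
    colimit.ι (suboDiagram E F B) S ≫ (colocCounit E F).app B = F.map S.obj.hom :=
  colimit.ι_desc _ _

lemma ιid_colocCounit (F : T ⥤ Ab.{u}) {X : T} (hX : E.P X) :
    colimit.ι (suboDiagram E F X) ⟨Over.mk (𝟙 X), hX⟩ ≫ (colocCounit E F).app X = 𝟙 _ := by
  rw [ι_colocCounit]; exact F.map_id X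

lemma colocCounit_ιid (F : T ⥤ Ab.{u}) {X : T} (hX : E.P X) :
    (colocCounit E F).app X ≫ colimit.ι (suboDiagram E F X) ⟨Over.mk (𝟙 X), hX⟩ = 𝟙 _ := by
  apply colimit.hom_ext
  intro S
  erw [← assoc, ι_colocCounit, comp_id]
  exact colimit.w (suboDiagram E F X)
    (show S ⟶ ⟨Over.mk (𝟙 X), hX⟩ from ObjectProperty.homMk (Over.homMk S.obj.hom (by simp)))

/-- Functoriality of the colocalisation in `F`. -/
noncomputable def colocNatMap {G H : T ⥤ Ab.{u}} (β : H ⟶ G) :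
    colocFunctor E H ⟶ colocFunctor E G where
  app B := colimMap (Functor.whiskerLeft (ObjectProperty.ι _ ⋙ Over.forget B) β)
  naturality := by
    intro B B' f
    apply colimit.hom_ext
    intro S
    dsimp only [colocFunctor]
    conv_lhs => erw [← assoc, ι_colocMap, ι_colimMap]
    conv_rhs => erw [← assoc, ι_colimMap, assoc, ι_colocMap]
    rfl

@[simp]
lemma ι_colocNatMap {G H : T ⥤ Ab.{u}} (β : H ⟶ G) {B : T} (S : SuboCat E B) :
    colimit.ι (suboDiagram E H B) S ≫ (colocNatMap E β).app B =
      β.app S.obj.left ≫ colimit.ι (suboDiagram E G B) S :=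
  ι_colimMap _ _

lemma colocNatMap_counit {G H : T ⥤ Ab.{u}} (β : H ⟶ G) :
    colocNatMap E β ≫ colocCounit E G = colocCounit E H ≫ β := by
  ext B : 2
  apply colimit.hom_ext
  intro S
  erw [NatTrans.comp_app, NatTrans.comp_app, ← assoc, ι_colocNatMap, assoc, ι_colocCounit,
    ← assoc, ι_colocCounit]
  exact (β.naturality _).symm

/-- Key computation: the value of `ι S ≫ counit ≫ α` only depends on `α ≫ counit`. -/
lemma coloc_key {G H : T ⥤ Ab.{u}} (α : H ⟶ colocFunctor E G) {B : T} (S : SuboCat E B) :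
    colimit.ι (suboDiagram E H B) S ≫ (colocCounit E H).app B ≫ α.app B =
      (α ≫ colocCounit E G).app S.obj.left ≫
        colimit.ι (suboDiagram E G S.obj.left) ⟨Over.mk (𝟙 _), S.property⟩ ≫
          colocMap E G S.obj.hom := by
  rw [← assoc, ι_colocCounit]
  erw [α.naturality]
  rw [NatTrans.comp_app, assoc]
  congr 1
  erw [← assoc, colocCounit_ιid, id_comp]

/-- **Universal property of the colocalisation.**
Let `G, H : T ⥤ Ab` be homological functors on a small triangulated category
`T` with thick subcategory `E`, and suppose `H` is colocal, i.e. the canonical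
natural transformation `R⊥H ⟶ H` is an isomorphism.  Then composition with the
canonical natural transformation `R⊥G ⟶ G` gives a bijection between natural
transformations `H ⟶ R⊥G` and natural transformations `H ⟶ G`. -/
theorem colocalisation_universal_property [IsTriangulated T] [ObjectProperty.IsClosedUnderIsomorphisms E.P]
    (hthick : ∀ ⦃X Y : T⦄ (i : X ⟶ Y) (r : Y ⟶ X), i ≫ r = 𝟙 X → E.P Y → E.P X)
    (G H : T ⥤ Ab.{u}) [G.IsHomological] [H.IsHomological]
    (hH : IsIso (colocCounit E H)) :
    Function.Bijective (fun (α : H ⟶ colocFunctor E G) => α ≫ colocCounit E G) := by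
  constructor
  · intro α₁ α₂ h
    dsimp only at h
    rw [← cancel_epi (colocCounit E H)]
    ext B : 2
    apply colimit.hom_ext
    intro S
    rw [NatTrans.comp_app, NatTrans.comp_app, coloc_key, coloc_key, h]
  · intro β
    refine ⟨inv (colocCounit E H) ≫ colocNatMap E β, ?_⟩
    dsimp only
    rw [assoc, colocNatMap_counit, ← assoc, IsIso.inv_hom_id, id_comp]
end

section
/- Exactness of the localisation–colocalisation sequence at F(B): let F : T ⥤ Ab be a homological functor, B an object of T and x ∈ F(B). Then there exists an E-weak equivalence t : B → C with F(t)(x) = 0 if and only if there exist an object E of E, a morphism s : E → B and an element y ∈ F(E) with F(s)(y) = x. (Equivalently, the kernel of the canonical map F(B) → RF(B) equals the image of the canonical map R⊥F(B) → F(B).) -/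
open CategoryTheory Category Limits Pretriangulated Triangulated

/-- **Exactness of the localisation–colocalisation sequence at `F(B)`.**
Let `T` be a triangulated category, `E` a thick subcategory, `F : T ⥤ Ab` a
homological functor, `B` an object of `T` and `x ∈ F(B)`.  Then there exists an
`E`-weak equivalence `t : B ⟶ C` with `F(t)(x) = 0` if and only if there exist
an object `X` of `E`, a morphism `s : X ⟶ B` and an element `y ∈ F(X)` with
`F(s)(y) = x`. -/
theorem exact_at_middle {T : Type*} [Category T] [HasZeroObject T] [Preadditive T]
    [HasShift T ℤ] [∀ n : ℤ, (shiftFunctor T n).Additive] [Pretriangulated T]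
    [IsTriangulated T] (E : ObjectProperty T) [E.IsTriangulated] [E.IsClosedUnderIsomorphisms]
    (hthick : ∀ ⦃X Y : T⦄ (i : X ⟶ Y) (r : Y ⟶ X), i ≫ r = 𝟙 X → E Y → E X)
    (F : T ⥤ Ab) [F.IsHomological] (B : T) (x : F.obj B) :
    (∃ (C : T) (t : B ⟶ C), E.trW t ∧ F.map t x = 0) ↔
      (∃ (X : T) (_ : E X) (s : X ⟶ B) (y : F.obj X), F.map s y = x) := by
  constructor
  · rintro ⟨C, t, ht, hx⟩
    rw [E.trW_iff'] at ht
    obtain ⟨X, f, h, hT, hX⟩ := ht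
    have hexact := F.map_distinguished_exact _ hT
    rw [ShortComplex.ab_exact_iff] at hexact
    obtain ⟨y, hy⟩ := hexact x hx
    exact ⟨X, hX, f, y, hy⟩
  · rintro ⟨X, hX, s, y, hy⟩
    obtain ⟨C, t, h, hT⟩ := distinguished_cocone_triangle s
    refine ⟨C, t, (E.trW_iff' t).2 ⟨X, s, h, hT, hX⟩, ?_⟩
    have : s ≫ t = 0 := comp_distTriang_mor_zero₁₂ _ hT
    rw [← hy, ← comp_apply, ← F.map_comp, this, F.map_zero]
    rfl
end
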